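/- Let D be a discount function. Then D exhibits decreasing impatience (DI) if and only if the function t ↦ ln D(t) is convex on [0,∞); and D exhibits strictly DI if and only if t ↦ ln D(t) is strictly convex on [0,∞). -/

import Mathlib

def IsDiscount (D : ℝ → ℝ) : Prop :=
  D 0 = 1 ∧ (∀ t, 0 ≤ t → 0 < D t) ∧ StrictAntiOn D (Set.Ici 0) ∧
    Filter.Tendsto D Filter.atTop (nhds 0)

def DI (D : ℝ → ℝ) : Prop :=
  ∀ t s σ : ℝ, 0 ≤ t → t < s → 0 < σ → D s / D (s + σ) ≤ D t / D (t + σ)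

def StrictDI (D : ℝ → ℝ) : Prop :=
  ∀ t s σ : ℝ, 0 ≤ t → t < s → 0 < σ → D s / D (s + σ) < D t / D (t + σ)


open Finset

-- average of first p terms of a monotone sequence ≤ average of first q terms
lemma chunk_le (g : ℕ → ℝ) (hg : Monotone g) {p q : ℕ} (h : p ≤ q) :
    (q : ℝ) * ∑ k ∈ range p, g k ≤ (p : ℝ) * ∑ k ∈ range q, g k := by
  have hsplit : ∑ k ∈ range q, g k = ∑ k ∈ range p, g k + ∑ k ∈ Ico p q, g k := by
    simp only [range_eq_Ico]
    exact (Finset.sum_Ico_consecutive _ (Nat.zero_le p) h).symm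
  have hA : ∑ k ∈ range p, g k ≤ (p : ℝ) * g p := by
    calc ∑ k ∈ range p, g k ≤ ∑ _k ∈ range p, g p :=
          Finset.sum_le_sum fun i hi => hg (le_of_lt (Finset.mem_range.1 hi))
      _ = (p : ℝ) * g p := by simp [mul_comm]
  have hB : ((q : ℝ) - p) * g p ≤ ∑ k ∈ Ico p q, g k := by
    have : ∑ _k ∈ Ico p q, g p ≤ ∑ k ∈ Ico p q, g k :=
      Finset.sum_le_sum fun i hi => hg (Finset.mem_Ico.1 hi).1
    have hcard : ∑ _k ∈ Ico p q, g p = ((q - p : ℕ) : ℝ) * g p := by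
      simp [Nat.card_Ico, mul_comm]
    have hc : ((q - p : ℕ) : ℝ) = (q : ℝ) - p := by
      rw [Nat.cast_sub h]
    rw [hcard, hc] at this; exact this
  have hp : (0:ℝ) ≤ p := Nat.cast_nonneg p
  have hqp : (0:ℝ) ≤ (q:ℝ) - p := by
    have : (p:ℝ) ≤ q := Nat.cast_le.2 h
    linarith
  nlinarith [mul_le_mul_of_nonneg_left hA hqp, mul_le_mul_of_nonneg_left hB hp]

-- Wright convexity at rational interpolation points
lemma rat_pt (f : ℝ → ℝ)
    (hw : ∀ t s σ : ℝ, 0 ≤ t → t < s → 0 < σ → f (t + σ) - f t ≤ f (s + σ) - f s)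
    {t s : ℝ} (ht : 0 ≤ t) (hts : t < s) (p q : ℕ) (hpq : p ≤ q) (hq : 0 < q) :
    f (t + p * ((s - t) / q)) ≤ f t + ((p : ℝ) / q) * (f s - f t) := by
  set h := (s - t) / q with hh
  have hq' : (0:ℝ) < q := Nat.cast_pos.2 hq
  have hhpos : 0 < h := div_pos (by linarith) hq'
  set g : ℕ → ℝ := fun k => f (t + (k + 1) * h) - f (t + k * h) with hg
  have hmono : Monotone g := by
    intro i j hij
    rcases eq_or_lt_of_le hij with rfl | hij
    · exact le_rfl
    · have hi : (0:ℝ) ≤ t + i * h := by positivity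
      have hlt : t + (i:ℝ) * h < t + j * h := by
        have : (i:ℝ) < j := Nat.cast_lt.2 hij
        nlinarith
      have := hw (t + i * h) (t + j * h) h hi hlt hhpos
      simp only [hg]
      have e1 : t + (i:ℝ) * h + h = t + ((i:ℝ) + 1) * h := by ring
      have e2 : t + (j:ℝ) * h + h = t + ((j:ℝ) + 1) * h := by ring
      rw [e1, e2] at this
      exact this
  have htel : ∀ n : ℕ, ∑ k ∈ range n, g k = f (t + n * h) - f t := by
    intro n
    have := Finset.sum_range_sub (fun k : ℕ => f (t + k * h)) n
    simpa [hg] using this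
  have hch := chunk_le g hmono hpq
  rw [htel, htel] at hch
  have hs : t + (q : ℝ) * h = s := by
    rw [hh, ← mul_div_assoc, mul_comm, mul_div_assoc, div_self hq'.ne', mul_one]; ring
  rw [hs] at hch
  -- hch : q * (f (t + p * h) - f t) ≤ p * (f s - f t)
  rw [div_mul_eq_mul_div, ← sub_le_iff_le_add', le_div_iff₀ hq']
  linarith [hch]

lemma convex_of_wright (f : ℝ → ℝ)
    (hanti : ∀ x y : ℝ, 0 ≤ x → x ≤ y → f y ≤ f x)
    (hw : ∀ t s σ : ℝ, 0 ≤ t → t < s → 0 < σ → f (t + σ) - f t ≤ f (s + σ) - f s) :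
    ConvexOn ℝ (Set.Ici 0) f := by
  have key : ∀ x y : ℝ, 0 ≤ x → x < y → ∀ a b : ℝ, 0 ≤ a → 0 ≤ b → a + b = 1 →
      f (a * x + b * y) ≤ a * f x + b * f y := by
    intro x y hx hxy a b ha hb hab
    rcases eq_or_lt_of_le hb with rfl | hb
    · have : a = 1 := by linarith
      subst this; simp
    rcases eq_or_lt_of_le (by linarith : b ≤ 1) with rfl | hb1
    · have : a = 0 := by linarith
      subst this; simp
    -- 0 < b < 1
    have ha' : a = 1 - b := by linarith
    subst ha'
    have hyx : 0 < y - x := by linarith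
    apply le_of_forall_pos_le_add
    intro ε hε
    set d := f x - f y with hd
    have hdnn : 0 ≤ d := sub_nonneg.2 (hanti x y hx hxy.le)
    have hδ : 0 < ε / (d + 1) := by positivity
    set L := max 0 (b - ε / (d + 1)) with hL
    have hLb : L < b := by
      rcases max_cases 0 (b - ε / (d + 1)) with ⟨h1, _⟩ | ⟨h1, _⟩ <;> rw [hL, h1] <;> linarith
    obtain ⟨r, hrL, hrb⟩ := exists_rat_btwn hLb
    have hr0 : (0:ℝ) < r := lt_of_le_of_lt (le_max_left _ _) hrL
    have hr1 : (r:ℝ) < 1 := hrb.trans hb1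
    have hnum : 0 < r.num := Rat.num_pos.2 (by exact_mod_cast hr0)
    set p := r.num.toNat with hp
    set q := r.den with hqdef
    have hqpos : 0 < q := r.pos
    have hpn : (p:ℝ) = (r.num : ℝ) := by
      rw [hp]; exact_mod_cast Int.toNat_of_nonneg hnum.le
    have hcast : ((p : ℝ)) / q = (r : ℝ) := by
      rw [Rat.cast_def, hpn]
    have hpq : p ≤ q := by
      have hq' : (0:ℝ) < (q:ℝ) := Nat.cast_pos.2 hqpos
      have h5 : (p : ℝ) / q ≤ 1 := by rw [hcast]; linarith
      have : (p : ℝ) ≤ q := (div_le_one hq').1 h5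
      exact_mod_cast this
    have hratpt := rat_pt f hw hx hxy p q hpq hqpos
    have hur : x + p * ((y - x) / q) ≤ x + b * (y - x) := by
      have : (p : ℝ) * ((y - x) / q) = ((p:ℝ)/q) * (y - x) := by ring
      rw [this, hcast]
      nlinarith [hrb]
    have hx' : (0:ℝ) ≤ x + p * ((y - x)/q) := by positivity
    have h1 : f (x + b * (y - x)) ≤ f (x + p * ((y - x)/q)) := hanti _ _ hx' hur
    have h2 : f (x + p * ((y - x)/q)) ≤ f x + (r : ℝ) * (f y - f x) := by
      rw [← hcast]; exact hratpt
    have heq : (1 - b) * x + b * y = x + b * (y - x) := by ring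
    rw [heq]
    have hrclose : b - (r:ℝ) ≤ ε / (d + 1) := by
      have : b - ε / (d + 1) ≤ L := le_max_right _ _
      linarith
    have hfin : (b - (r:ℝ)) * d ≤ ε := by
      have h3 : (b - (r:ℝ)) * d ≤ (ε / (d+1)) * d :=
        mul_le_mul_of_nonneg_right hrclose hdnn
      have h4 : (ε / (d+1)) * d ≤ ε := by
        rw [div_mul_eq_mul_div, div_le_iff₀ (by linarith : (0:ℝ) < d + 1)]
        nlinarith
      exact h3.trans h4
    calc f (x + b * (y - x)) ≤ f x + (r:ℝ) * (f y - f x) := h1.trans h2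
      _ = (1 - b) * f x + b * f y + (b - r) * d := by rw [hd]; ring
      _ ≤ (1 - b) * f x + b * f y + ε := by linarith
  constructor
  · exact convex_Ici 0
  · intro x hx y hy a b ha hb hab
    simp only [smul_eq_mul]
    rcases lt_trichotomy x y with h | rfl | h
    · exact key x y hx h a b ha hb hab
    · have hxx : a * x + b * x = x := by rw [← add_mul, hab, one_mul]
      rw [hxx, ← add_mul, hab, one_mul]
    · have := key y x hy h b a hb ha (by linarith)
      calc f (a * x + b * y) = f (b * y + a * x) := by ring_nf
        _ ≤ b * f y + a * f x := this
        _ = a * f x + b * f y := by ring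

lemma strictConvex_of_convex_mid (f : ℝ → ℝ)
    (hconv : ConvexOn ℝ (Set.Ici 0) f)
    (hmid : ∀ t s : ℝ, 0 ≤ t → t < s → f ((t + s) / 2) < (f t + f s) / 2) :
    StrictConvexOn ℝ (Set.Ici 0) f := by
  have key : ∀ x y : ℝ, 0 ≤ x → x < y → ∀ a b : ℝ, 0 < a → 0 < b → a + b = 1 →
      f (a * x + b * y) < a * f x + b * f y := by
    intro x y hx hxy a b ha hb hab
    have hy : (0:ℝ) ≤ y := hx.trans hxy.le
    have hm : (0:ℝ) ≤ (x + y) / 2 := by linarith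
    have hmem : (x + y) / 2 ∈ Set.Ici (0:ℝ) := hm
    have hmlt := hmid x y hx hxy
    rcases le_or_gt b (1/2) with hble | hbgt
    · -- u = (1-2b) x + 2b * m
      have hθ1 : 0 ≤ 1 - 2*b := by linarith
      have hθ2 : (0:ℝ) ≤ 2*b := by linarith
      have hrep : a * x + b * y = (1 - 2*b) * x + (2*b) * ((x + y)/2) := by
        have : a = 1 - b := by linarith
        rw [this]; ring
      have h1 := hconv.2 (Set.mem_Ici.2 hx) hmem hθ1 hθ2 (by ring)
      simp only [smul_eq_mul] at h1
      rw [hrep]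
      calc f ((1 - 2*b) * x + (2*b) * ((x + y)/2))
          ≤ (1 - 2*b) * f x + (2*b) * f ((x+y)/2) := h1
        _ < (1 - 2*b) * f x + (2*b) * ((f x + f y)/2) := by nlinarith
        _ = a * f x + b * f y := by
            have : a = 1 - b := by linarith
            rw [this]; ring
    · -- u = 2a * m + (1-2a) y
      have hθ1 : (0:ℝ) ≤ 2*a := by linarith
      have hθ2 : 0 ≤ 1 - 2*a := by linarith
      have hrep : a * x + b * y = (2*a) * ((x + y)/2) + (1 - 2*a) * y := by
        have : b = 1 - a := by linarith
        rw [this]; ring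
      have h1 := hconv.2 hmem (Set.mem_Ici.2 hy) hθ1 hθ2 (by ring)
      simp only [smul_eq_mul] at h1
      rw [hrep]
      calc f ((2*a) * ((x + y)/2) + (1 - 2*a) * y)
          ≤ (2*a) * f ((x+y)/2) + (1 - 2*a) * f y := h1
        _ < (2*a) * ((f x + f y)/2) + (1 - 2*a) * f y := by nlinarith
        _ = a * f x + b * f y := by
            have : b = 1 - a := by linarith
            rw [this]; ring
  constructor
  · exact convex_Ici 0
  · intro x hx y hy hne a b ha hb hab
    simp only [smul_eq_mul]
    rcases lt_trichotomy x y with h | h | h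
    · exact key x y hx h a b ha hb hab
    · exact absurd h hne
    · have := key y x hy h b a hb ha (by linarith)
      calc f (a * x + b * y) = f (b * y + a * x) := by ring_nf
        _ < b * f y + a * f x := this
        _ = a * f x + b * f y := by ring

lemma wright_of_convex (f : ℝ → ℝ) (hc : ConvexOn ℝ (Set.Ici 0) f)
    {t s σ : ℝ} (ht : 0 ≤ t) (hts : t < s) (hσ : 0 < σ) :
    f (t + σ) - f t ≤ f (s + σ) - f s := by
  have hs : (0:ℝ) ≤ s := ht.trans hts.le
  have htσ : (0:ℝ) ≤ t + σ := by linarith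
  have hsσ : (0:ℝ) ≤ s + σ := by linarith
  have h1 : (f (t + σ) - f t) / ((t + σ) - t) ≤ (f (s + σ) - f t) / ((s + σ) - t) :=
    hc.secant_mono (Set.mem_Ici.2 ht) (Set.mem_Ici.2 htσ) (Set.mem_Ici.2 hsσ)
      (by intro h; nlinarith [h]) (by intro h; nlinarith [h]) (by linarith)
  have h2 : (f t - f (s + σ)) / (t - (s + σ)) ≤ (f s - f (s + σ)) / (s - (s + σ)) :=
    hc.secant_mono (Set.mem_Ici.2 hsσ) (Set.mem_Ici.2 ht) (Set.mem_Ici.2 hs)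
      (by intro h; nlinarith [h]) (by intro h; nlinarith [h]) hts.le
  have e1 : (f t - f (s + σ)) / (t - (s + σ)) = (f (s + σ) - f t) / ((s + σ) - t) := by
    rw [← neg_div_neg_eq]; ring_nf
  have e2 : (f s - f (s + σ)) / (s - (s + σ)) = (f (s + σ) - f s) / σ := by
    rw [← neg_div_neg_eq]; ring_nf
  have e3 : (f (t + σ) - f t) / ((t + σ) - t) = (f (t + σ) - f t) / σ := by ring_nf
  rw [e3] at h1; rw [e1, e2] at h2
  have := h1.trans h2
  calc f (t + σ) - f t = ((f (t + σ) - f t) / σ) * σ := by field_simp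
    _ ≤ ((f (s + σ) - f s) / σ) * σ := mul_le_mul_of_nonneg_right this hσ.le
    _ = f (s + σ) - f s := by field_simp

lemma strict_wright_of_convex (f : ℝ → ℝ) (hc : StrictConvexOn ℝ (Set.Ici 0) f)
    {t s σ : ℝ} (ht : 0 ≤ t) (hts : t < s) (hσ : 0 < σ) :
    f (t + σ) - f t < f (s + σ) - f s := by
  have hs : (0:ℝ) ≤ s := ht.trans hts.le
  have htσ : (0:ℝ) ≤ t + σ := by linarith
  have hsσ : (0:ℝ) ≤ s + σ := by linarith
  have h1 : (f (t + σ) - f t) / ((t + σ) - t) ≤ (f (s + σ) - f t) / ((s + σ) - t) :=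
    hc.convexOn.secant_mono (Set.mem_Ici.2 ht) (Set.mem_Ici.2 htσ) (Set.mem_Ici.2 hsσ)
      (by intro h; nlinarith [h]) (by intro h; nlinarith [h]) (by linarith)
  have h2 : (f t - f (s + σ)) / (t - (s + σ)) < (f s - f (s + σ)) / (s - (s + σ)) :=
    hc.secant_strict_mono (Set.mem_Ici.2 hsσ) (Set.mem_Ici.2 ht) (Set.mem_Ici.2 hs)
      (by intro h; nlinarith [h]) (by intro h; nlinarith [h]) hts
  have e1 : (f t - f (s + σ)) / (t - (s + σ)) = (f (s + σ) - f t) / ((s + σ) - t) := by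
    rw [← neg_div_neg_eq]; ring_nf
  have e2 : (f s - f (s + σ)) / (s - (s + σ)) = (f (s + σ) - f s) / σ := by
    rw [← neg_div_neg_eq]; ring_nf
  have e3 : (f (t + σ) - f t) / ((t + σ) - t) = (f (t + σ) - f t) / σ := by ring_nf
  rw [e3] at h1; rw [e1, e2] at h2
  have := h1.trans_lt h2
  calc f (t + σ) - f t = ((f (t + σ) - f t) / σ) * σ := by field_simp
    _ < ((f (s + σ) - f s) / σ) * σ := by
        exact mul_lt_mul_of_pos_right this hσ
    _ = f (s + σ) - f s := by field_simp

theorem di_iff_log_convex (D : ℝ → ℝ) (hD : IsDiscount D) :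
    (DI D ↔ ConvexOn ℝ (Set.Ici 0) (fun t => Real.log (D t))) ∧
    (StrictDI D ↔ StrictConvexOn ℝ (Set.Ici 0) (fun t => Real.log (D t))) := by
  obtain ⟨hD0, hpos, hSA, _⟩ := hD
  set f : ℝ → ℝ := fun t => Real.log (D t) with hf
  have htrans : ∀ t s σ : ℝ, 0 ≤ t → t < s → 0 < σ →
      ((D s / D (s + σ) ≤ D t / D (t + σ)) ↔ (f (t + σ) - f t ≤ f (s + σ) - f s)) := by
    intro t s σ ht hts hσ
    have hs : (0:ℝ) ≤ s := ht.trans hts.le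
    have p1 := hpos t ht
    have p2 := hpos s hs
    have p3 := hpos (t + σ) (by linarith)
    have p4 := hpos (s + σ) (by linarith)
    rw [← Real.log_le_log_iff (div_pos p2 p4) (div_pos p1 p3),
      Real.log_div p2.ne' p4.ne', Real.log_div p1.ne' p3.ne']
    constructor <;> intro h <;> simp only [hf] at * <;> linarith
  have htranss : ∀ t s σ : ℝ, 0 ≤ t → t < s → 0 < σ →
      ((D s / D (s + σ) < D t / D (t + σ)) ↔ (f (t + σ) - f t < f (s + σ) - f s)) := by
    intro t s σ ht hts hσ
    have hs : (0:ℝ) ≤ s := ht.trans hts.le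
    have p1 := hpos t ht
    have p2 := hpos s hs
    have p3 := hpos (t + σ) (by linarith)
    have p4 := hpos (s + σ) (by linarith)
    rw [← Real.log_lt_log_iff (div_pos p2 p4) (div_pos p1 p3),
      Real.log_div p2.ne' p4.ne', Real.log_div p1.ne' p3.ne']
    constructor <;> intro h <;> simp only [hf] at * <;> linarith
  have hanti : ∀ x y : ℝ, 0 ≤ x → x ≤ y → f y ≤ f x := by
    intro x y hx hxy
    rcases eq_or_lt_of_le hxy with rfl | hxy
    · exact le_rfl
    · have := hSA (Set.mem_Ici.2 hx) (Set.mem_Ici.2 (hx.trans hxy.le)) hxy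
      exact (Real.log_le_log_iff (hpos y (hx.trans hxy.le)) (hpos x hx)).2 this.le
  constructor
  · constructor
    · intro hdi
      exact convex_of_wright f hanti fun t s σ ht hts hσ =>
        (htrans t s σ ht hts hσ).1 (hdi t s σ ht hts hσ)
    · intro hc t s σ ht hts hσ
      exact (htrans t s σ ht hts hσ).2 (wright_of_convex f hc ht hts hσ)
  · constructor
    · intro hdi
      have hdi' : DI D := fun t s σ ht hts hσ => (hdi t s σ ht hts hσ).le
      have hconv : ConvexOn ℝ (Set.Ici 0) f :=
        convex_of_wright f hanti fun t s σ ht hts hσ =>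
          (htrans t s σ ht hts hσ).1 (hdi' t s σ ht hts hσ)
      apply strictConvex_of_convex_mid f hconv
      intro t s ht hts
      have hσ : 0 < (s - t) / 2 := by linarith
      have hmid := (htranss t ((t+s)/2) ((s-t)/2) ht (by linarith) hσ).1
        (hdi t ((t+s)/2) ((s-t)/2) ht (by linarith) hσ)
      have e1 : t + (s - t)/2 = (t + s)/2 := by ring
      have e2 : (t + s)/2 + (s - t)/2 = s := by ring
      rw [e1, e2] at hmid
      linarith
    · intro hc t s σ ht hts hσ
      exact (htranss t s σ ht hts hσ).2 (strict_wright_of_convex f hc ht hts hσ)
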